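/- Let Δ be the set of roots of a finite, reduced, crystallographic root system in a finite-dimensional real vector space V, and let σ : V → V be a linear automorphism with σ(Δ) = Δ and σ ∘ σ = id; set θ := −σ. Suppose A ⊆ Δ is a closed subset such that A ∪ σ(A) = Δ and A ∩ σ(A) ⊆ −A. Then Φ := A ∪ θ(A) is a closed subset of Δ and Φ ∪ (−Φ) = Δ (that is, Φ is a parabolic subset of roots). -/

import Mathlib

open Set

variable {ι M N : Type*}

/-- A root system is a root pairing for which the roots span their ambient module. -/
structure RootSystem (ι R M N : Type*) [CommRing R] [AddCommGroup M] [Module R M]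
    [AddCommGroup N] [Module R N] extends RootPairing ι R M N where
  span_eq_top : Submodule.span R (range root) = ⊤

/-- A subset `A` of the set of roots `Δ` is *closed* if whenever `α, β ∈ A` and
`α + β` is a root, `α + β ∈ A`. -/
def IsClosedSubset (Δ A : Set M) [Add M] : Prop :=
  ∀ α ∈ A, ∀ β ∈ A, α + β ∈ Δ → α + β ∈ A

/-- Let `Δ` be the set of roots of a finite, reduced, crystallographic root
system, and let `σ` be a linear involution of the ambient space with `σ(Δ) = Δ`; set
`θ := -σ`.  If `A ⊆ Δ` is closed with `A ∪ σ(A) = Δ` and `A ∩ σ(A) ⊆ -A`, then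
`Φ := A ∪ θ(A)` is a closed subset of `Δ` satisfying `Φ ∪ (-Φ) = Δ`, i.e. `Φ` is parabolic. -/
theorem closed_union_theta_is_parabolic
    [AddCommGroup M] [Module ℝ M] [AddCommGroup N] [Module ℝ N]
    [FiniteDimensional ℝ M] [Fintype ι]
    (P : RootSystem ι ℝ M N)
    (hcrys : P.IsCrystallographic) (hred : P.IsReduced)
    (σ : M ≃ₗ[ℝ] M)
    (hσΔ : σ '' range P.root = range P.root)
    (hσinv : ∀ v : M, σ (σ v) = v)
    (A : Set M)
    (hAΔ : A ⊆ range P.root)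
    (hAclosed : IsClosedSubset (range P.root) A)
    (hcover : A ∪ σ '' A = range P.root)
    (hcap : ∀ v ∈ A ∩ σ '' A, -v ∈ A) :
    IsClosedSubset (range P.root) (A ∪ (fun v => -(σ v)) '' A) ∧
      (A ∪ (fun v => -(σ v)) '' A) ⊆ range P.root ∧
      (A ∪ (fun v => -(σ v)) '' A) ∪ (fun v : M => -v) '' (A ∪ (fun v => -(σ v)) '' A)
        = range P.root := by
  -- Δ is closed under negation
  have hnegΔ : ∀ v ∈ range P.root, -v ∈ range P.root := by
    rintro v ⟨i, rfl⟩
    exact ⟨P.toRootPairing.reflectionPerm i i, by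
      rw [P.toRootPairing.root_reflectionPerm, P.toRootPairing.reflection_apply_self]⟩
  -- σ maps Δ into Δ and reflects membership
  have hσmem : ∀ v ∈ range P.root, σ v ∈ range P.root := fun v hv =>
    hσΔ ▸ mem_image_of_mem σ hv
  have hσmem' : ∀ v, σ v ∈ range P.root → v ∈ range P.root := by
    intro v hv
    have := hσmem _ hv
    rwa [hσinv] at this
  -- key step for the mixed case
  have key : ∀ x ∈ A, ∀ b ∈ A, x + -(σ b) ∈ range P.root →
      x + -(σ b) ∈ A ∪ (fun v => -(σ v)) '' A := by
    intro x hx b hb hsum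
    have hγ : x + -(σ b) ∈ A ∪ σ '' A := hcover ▸ hsum
    rcases hγ with hγ | ⟨c, hc, hcγ⟩
    · exact Or.inl hγ
    · -- γ = σ c, so c = σ x - b; then σ x = b + c ∈ A by closedness,
      -- hence -σ x ∈ A by hcap, and -c = b + -σ x ∈ A by closedness.
      have hcval : c = σ x + -b := by
        have := congrArg σ hcγ
        rw [hσinv] at this
        rw [this, map_add, map_neg, hσinv]
      have hσxΔ : σ x ∈ range P.root := hσmem _ (hAΔ hx)
      have hσxA : σ x ∈ A := by
        have := hAclosed b hb c hc (by rw [hcval]; simpa using hσxΔ)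
        rwa [hcval, add_comm b, add_assoc, neg_add_cancel, add_zero] at this
      have hnσx : -(σ x) ∈ A := hcap _ ⟨hσxA, ⟨x, hx, rfl⟩⟩
      have hncΔ : b + -(σ x) ∈ range P.root := by
        have : -c ∈ range P.root := hnegΔ _ (hAΔ hc)
        rwa [hcval, neg_add, neg_neg, add_comm] at this
      have hncA : -c ∈ A := by
        have := hAclosed b hb _ hnσx hncΔ
        rwa [hcval, neg_add, neg_neg, add_comm]
      exact Or.inr ⟨-c, hncA, by simp only [map_neg, neg_neg, hcγ]⟩
  refine ⟨?_, ?_, ?_⟩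
  · rintro α (hα | ⟨a, ha, rfl⟩) β (hβ | ⟨b, hb, rfl⟩) hsum
    · exact Or.inl (hAclosed α hα β hβ hsum)
    · exact key α hα b hb hsum
    · rw [add_comm] at hsum ⊢; exact key β hβ a ha hsum
    · -- both in θA
      have habΔ : a + b ∈ range P.root := by
        have := hσmem _ hsum
        rw [map_add, map_neg, map_neg, hσinv, hσinv, ← neg_add] at this
        have := hnegΔ _ this
        rwa [neg_neg] at this
      have habA : a + b ∈ A := hAclosed a ha b hb habΔ
      exact Or.inr ⟨a + b, habA, by simp [map_add, neg_add, add_comm]⟩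
  · rintro v (hv | ⟨a, ha, rfl⟩)
    · exact hAΔ hv
    · exact hnegΔ _ (hσmem _ (hAΔ ha))
  · apply Subset.antisymm
    · rintro v ((hv | ⟨a, ha, rfl⟩) | ⟨w, (hw | ⟨a, ha, rfl⟩), rfl⟩)
      · exact hAΔ hv
      · exact hnegΔ _ (hσmem _ (hAΔ ha))
      · exact hnegΔ _ (hAΔ hw)
      · simpa using hσmem _ (hAΔ ha)
    · intro v hv
      rcases hcover ▸ hv with hvA | ⟨a, ha, rfl⟩
      · exact Or.inl (Or.inl hvA)
      · exact Or.inr ⟨-(σ a), Or.inr ⟨a, ha, rfl⟩, by simp⟩
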